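/- Let g be a complex simple Lie algebra isomorphic to sl(2,ℂ). Viewed as a 6-dimensional real Lie algebra, the kernel of the operator Λ on real symmetric bilinear forms, (Λσ)(x,y,z,z') = σ([x,y],[z,z']) + σ([y,z],[x,z']) + σ([z,x],[y,z']), has real dimension 12 and consists exactly of the real parts of all symmetric ℂ-bilinear forms on g. -/

import Mathlib

noncomputable section
namespace KLA
open LieAlgebra.SpecialLinear Complex Module

set_option linter.unusedSectionVars false
set_option linter.unusedTactic false
set_option linter.unnecessarySeqFocus false




abbrev M2 := Matrix (Fin 2) (Fin 2) ℂ

lemma mem_sl (X : M2) : X ∈ sl (Fin 2) ℂ ↔ Matrix.trace X = 0 := Iff.rfl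

def E : sl (Fin 2) ℂ := ⟨!![0,1;0,0], by rw [mem_sl]; simp [Matrix.trace_fin_two]⟩
def F : sl (Fin 2) ℂ := ⟨!![0,0;1,0], by rw [mem_sl]; simp [Matrix.trace_fin_two]⟩
def H : sl (Fin 2) ℂ := ⟨!![1,0;0,-1], by rw [mem_sl]; simp [Matrix.trace_fin_two]⟩


lemma lie_HE : ⁅H, E⁆ = (2:ℂ) • E := by
  apply Subtype.ext
  show (H : M2) * E - (E : M2) * H = (2:ℂ) • (E : M2)
  show (!![1,0;0,-1] : M2) * !![0,1;0,0] - !![0,1;0,0] * !![1,0;0,-1] = (2:ℂ) • !![0,1;0,0]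
  ext i j
  fin_cases i <;> fin_cases j <;> (simp [Matrix.mul_apply, Fin.sum_univ_two]; try norm_num)

lemma lie_HF : ⁅H, F⁆ = (-2:ℂ) • F := by
  apply Subtype.ext
  show (!![1,0;0,-1] : M2) * !![0,0;1,0] - !![0,0;1,0] * !![1,0;0,-1] = (-2:ℂ) • !![0,0;1,0]
  ext i j
  fin_cases i <;> fin_cases j <;> (simp [Matrix.mul_apply, Fin.sum_univ_two]; try norm_num)

lemma lie_EF : ⁅E, F⁆ = H := by
  apply Subtype.ext
  show (!![0,1;0,0] : M2) * !![0,0;1,0] - !![0,0;1,0] * !![0,1;0,0] = (!![1,0;0,-1] : M2)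
  ext i j
  fin_cases i <;> fin_cases j <;> (simp [Matrix.mul_apply, Fin.sum_univ_two]; try norm_num)

lemma sl_span (X : sl (Fin 2) ℂ) :
    X = (X : M2) 0 1 • E + (X : M2) 1 0 • F + (X : M2) 0 0 • H := by
  have htr : Matrix.trace (X : M2) = 0 := (mem_sl _).mp X.2
  rw [Matrix.trace_fin_two] at htr
  apply Subtype.ext
  show (X : M2) = (X : M2) 0 1 • (E : M2) + (X : M2) 1 0 • (F : M2) + (X : M2) 0 0 • (H : M2)
  ext i j
  fin_cases i <;> fin_cases j <;>
    simp [E, F, H] <;> linear_combination htr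

lemma sl_indep : LinearIndependent ℂ ![E, F, H] := by
  rw [Fintype.linearIndependent_iff]
  intro g hg
  have h0 : (g 0 • E + g 1 • F + g 2 • H : sl (Fin 2) ℂ) = 0 := by
    simpa [Fin.sum_univ_three] using hg
  have h1 : (g 0 • (E:M2) + g 1 • (F:M2) + g 2 • (H:M2)) = 0 := by
    have := congrArg Subtype.val h0
    simpa using this
  intro i
  have h01 := congrFun (congrFun h1 0) 1
  have h10 := congrFun (congrFun h1 1) 0
  have h00 := congrFun (congrFun h1 0) 0
  simp [E, F, H] at h01 h10 h00
  fin_cases i <;> simpa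

variable {L : Type*} [LieRing L] [LieAlgebra ℂ L] [Module ℝ L] [IsScalarTower ℝ ℂ L]

lemma exists_sl2_triple (f : L ≃ₗ⁅ℂ⁆ sl (Fin 2) ℂ) :
    ∃ e fv h : L, ⁅h,e⁆ = (2:ℂ)•e ∧ ⁅h,fv⁆ = (-2:ℂ)•fv ∧ ⁅e,fv⁆ = h ∧
      (∀ v : L, ∃ a b c : ℂ, v = a•e + b•fv + c•h) ∧ LinearIndependent ℂ ![e,fv,h] := by
  let g := f.symm
  have hgl : ∀ X, g.toLinearEquiv X = g X := fun _ => rfl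
  refine ⟨g E, g F, g H, ?_, ?_, ?_, ?_, ?_⟩
  · rw [← LieEquiv.map_lie g, lie_HE, ← hgl, ← hgl, g.toLinearEquiv.map_smul]
  · rw [← LieEquiv.map_lie g, lie_HF, ← hgl, ← hgl, g.toLinearEquiv.map_smul]
  · rw [← LieEquiv.map_lie g, lie_EF]
  · intro v
    refine ⟨(f v : M2) 0 1, (f v : M2) 1 0, (f v : M2) 0 0, ?_⟩
    have hv : v = g ((f v : M2) 0 1 • E + (f v : M2) 1 0 • F + (f v : M2) 0 0 • H) := by
      rw [← sl_span (f v)]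
      exact (f.symm_apply_apply v).symm
    calc v = g ((f v : M2) 0 1 • E + (f v : M2) 1 0 • F + (f v : M2) 0 0 • H) := hv
    _ = (f v : M2) 0 1 • g E + (f v : M2) 1 0 • g F + (f v : M2) 0 0 • g H := by
        rw [← hgl, map_add, map_add, map_smul, map_smul, map_smul]
        simp [hgl]
  · have h1 := sl_indep.map' g.toLinearEquiv.toLinearMap g.toLinearEquiv.ker
    convert h1 using 1
    funext i
    fin_cases i <;> rfl
    rfl


section PartA
variable (σ : L →ₗ[ℂ] L →ₗ[ℂ] ℂ)

/-- The complex Λ-expression. -/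
def S (x y z w : L) : ℂ := σ ⁅x,y⁆ ⁅z,w⁆ + σ ⁅y,z⁆ ⁅x,w⁆ + σ ⁅z,x⁆ ⁅y,w⁆

variable {σ}

lemma S_xx (z w x : L) : S σ x x z w = 0 := by
  simp [S]
  rw [← lie_skew x z]
  simp only [map_neg, LinearMap.neg_apply, neg_add_cancel, add_neg_cancel]

lemma S_yy (x y w : L) : S σ x y y w = 0 := by
  simp [S]
  rw [← lie_skew y x]
  simp only [map_neg, LinearMap.neg_apply, neg_add_cancel, add_neg_cancel]

lemma S_zz (hσ : ∀ a b, σ a b = σ b a) (x y z : L) : S σ x y z z = 0 := by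
  simp only [S]
  rw [hσ ⁅y,z⁆ ⁅x,z⁆]
  simp
  rw [← lie_skew x z]
  simp only [map_neg, LinearMap.neg_apply, neg_add_cancel, add_neg_cancel]

lemma S_xz (x y w : L) : S σ x y x w = 0 := by
  simp [S]
  rw [← lie_skew y x]
  simp only [map_neg, LinearMap.neg_apply, neg_add_cancel, add_neg_cancel]

lemma S_xw (hσ : ∀ a b, σ a b = σ b a) (x y z : L) : S σ x y z x = 0 := by
  simp only [S]
  rw [hσ ⁅z,x⁆ ⁅y,x⁆]
  simp
  rw [← lie_skew y x]
  simp only [map_neg, LinearMap.neg_apply, neg_add_cancel, add_neg_cancel]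

lemma S_yw (hσ : ∀ a b, σ a b = σ b a) (x y z : L) : S σ x y z y = 0 := by
  simp only [S]
  rw [hσ ⁅y,z⁆ ⁅x,y⁆]
  simp
  rw [← lie_skew y z]
  simp only [map_neg, LinearMap.neg_apply, neg_add_cancel, add_neg_cancel]

lemma S_add1 (x x' y z w : L) : S σ (x+x') y z w = S σ x y z w + S σ x' y z w := by
  simp [S, add_lie, lie_add]; ring
lemma S_add2 (x y y' z w : L) : S σ x (y+y') z w = S σ x y z w + S σ x y' z w := by
  simp [S, add_lie, lie_add]; ring
lemma S_add3 (x y z z' w : L) : S σ x y (z+z') w = S σ x y z w + S σ x y z' w := by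
  simp [S, add_lie, lie_add]; ring
lemma S_add4 (x y z w w' : L) : S σ x y z (w+w') = S σ x y z w + S σ x y z w' := by
  simp [S, add_lie, lie_add]; ring
lemma S_smul1 (c : ℂ) (x y z w : L) : S σ (c•x) y z w = c * S σ x y z w := by
  simp [S, smul_lie, lie_smul]; ring
lemma S_smul2 (c : ℂ) (x y z w : L) : S σ x (c•y) z w = c * S σ x y z w := by
  simp [S, smul_lie, lie_smul]; ring
lemma S_smul3 (c : ℂ) (x y z w : L) : S σ x y (c•z) w = c * S σ x y z w := by
  simp [S, smul_lie, lie_smul]; ring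
lemma S_smul4 (c : ℂ) (x y z w : L) : S σ x y z (c•w) = c * S σ x y z w := by
  simp [S, smul_lie, lie_smul]; ring

/-- evaluation of a linear functional vanishing on a spanning triple -/
lemma lin_eval {e fv h : L} (hspan : ∀ v : L, ∃ a b c : ℂ, v = a•e + b•fv + c•h)
    (φ : L → ℂ) (hadd : ∀ a b, φ (a+b) = φ a + φ b)
    (hsmul : ∀ (c : ℂ) a, φ (c•a) = c * φ a)
    (h1 : φ e = 0) (h2 : φ fv = 0) (h3 : φ h = 0) : ∀ v, φ v = 0 := by
  intro v
  obtain ⟨a, b, c, rfl⟩ := hspan v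
  rw [hadd, hadd, hsmul, hsmul, hsmul, h1, h2, h3]
  ring

set_option maxHeartbeats 2000000 in
lemma S_vanish (hσ : ∀ a b, σ a b = σ b a)
    {e fv h : L} (hspan : ∀ v : L, ∃ a b c : ℂ, v = a•e + b•fv + c•h) :
    ∀ x y z w : L, S σ x y z w = 0 := by
  have base : ∀ u1 u2 u3 u4 : L,
      (u1 = e ∨ u1 = fv ∨ u1 = h) → (u2 = e ∨ u2 = fv ∨ u2 = h) →
      (u3 = e ∨ u3 = fv ∨ u3 = h) → (u4 = e ∨ u4 = fv ∨ u4 = h) →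
      S σ u1 u2 u3 u4 = 0 := by
    intro u1 u2 u3 u4 h1 h2 h3 h4
    rcases h1 with rfl|rfl|rfl <;> rcases h2 with rfl|rfl|rfl <;>
      rcases h3 with rfl|rfl|rfl <;> rcases h4 with rfl|rfl|rfl <;>
      first
        | exact S_xx _ _ _
        | exact S_yy _ _ _
        | exact S_zz hσ _ _ _
        | exact S_xz _ _ _
        | exact S_xw hσ _ _ _
        | exact S_yw hσ _ _ _
  have step4 : ∀ u1 u2 u3 : L,
      (u1 = e ∨ u1 = fv ∨ u1 = h) → (u2 = e ∨ u2 = fv ∨ u2 = h) →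
      (u3 = e ∨ u3 = fv ∨ u3 = h) → ∀ w, S σ u1 u2 u3 w = 0 := fun u1 u2 u3 h1 h2 h3 =>
    lin_eval hspan _ (S_add4 u1 u2 u3) (fun c a => S_smul4 c u1 u2 u3 a)
      (base _ _ _ _ h1 h2 h3 (Or.inl rfl)) (base _ _ _ _ h1 h2 h3 (Or.inr (Or.inl rfl)))
      (base _ _ _ _ h1 h2 h3 (Or.inr (Or.inr rfl)))
  have step3 : ∀ u1 u2 : L,
      (u1 = e ∨ u1 = fv ∨ u1 = h) → (u2 = e ∨ u2 = fv ∨ u2 = h) →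
      ∀ z w, S σ u1 u2 z w = 0 := by
    intro u1 u2 h1 h2 z w
    revert z
    exact fun z => lin_eval hspan (fun z => S σ u1 u2 z w)
      (fun a b => S_add3 u1 u2 a b w) (fun c a => S_smul3 c u1 u2 a w)
      (step4 _ _ _ h1 h2 (Or.inl rfl) w) (step4 _ _ _ h1 h2 (Or.inr (Or.inl rfl)) w)
      (step4 _ _ _ h1 h2 (Or.inr (Or.inr rfl)) w) z
  have step2 : ∀ u1 : L, (u1 = e ∨ u1 = fv ∨ u1 = h) → ∀ y z w, S σ u1 y z w = 0 := by
    intro u1 h1 y z w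
    exact lin_eval hspan (fun y => S σ u1 y z w)
      (fun a b => S_add2 u1 a b z w) (fun c a => S_smul2 c u1 a z w)
      (step3 _ _ h1 (Or.inl rfl) z w) (step3 _ _ h1 (Or.inr (Or.inl rfl)) z w)
      (step3 _ _ h1 (Or.inr (Or.inr rfl)) z w) y
  intro x y z w
  exact lin_eval hspan (fun x => S σ x y z w)
    (fun a b => S_add1 a b y z w) (fun c a => S_smul1 c a y z w)
    (step2 _ (Or.inl rfl) y z w) (step2 _ (Or.inr (Or.inl rfl)) y z w)
    (step2 _ (Or.inr (Or.inr rfl)) y z w) x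

end PartA
section PartB
variable (B : L →ₗ[ℝ] L →ₗ[ℝ] ℝ)

/-- the defect of `B` from being the real part of a complex bilinear form -/
def D (a b : L) : ℝ := B ((I:ℂ)•a) b - B a ((I:ℂ)•b)

variable {B}

lemma D_brackets
    (hlam : ∀ x y z w : L, B ⁅x, y⁆ ⁅z, w⁆ + B ⁅y, z⁆ ⁅x, w⁆ + B ⁅z, x⁆ ⁅y, w⁆ = 0)
    (x y z w : L) : D B ⁅x,y⁆ ⁅z,w⁆ = 0 := by
  have key : ∀ x y z w : L, D B ⁅x,y⁆ ⁅z,w⁆ + D B ⁅y,z⁆ ⁅x,w⁆ = 0 := by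
    intro x y z w
    have h1 := hlam x ((I:ℂ)•y) z w
    rw [lie_smul, smul_lie, smul_lie] at h1
    have h2 := hlam x y z ((I:ℂ)•w)
    rw [lie_smul, lie_smul, lie_smul] at h2
    simp only [D]
    linarith [h1, h2]
  have p := key x y z w
  have q := key y z x w
  have r := key z x y w
  linarith [p, q, r]

lemma sum_of_brackets {e fv h : L}
    (hHE : ⁅h,e⁆ = (2:ℂ)•e) (hHF : ⁅h,fv⁆ = (-2:ℂ)•fv) (hEF : ⁅e,fv⁆ = h)
    (hspan : ∀ v : L, ∃ a b c : ℂ, v = a•e + b•fv + c•h) (v : L) :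
    ∃ x₁ y₁ x₂ y₂ x₃ y₃ : L, v = ⁅x₁,y₁⁆ + ⁅x₂,y₂⁆ + ⁅x₃,y₃⁆ := by
  obtain ⟨a, b, c, rfl⟩ := hspan v
  refine ⟨(a/2)•h, e, (-(b/2))•h, fv, c•e, fv, ?_⟩
  rw [smul_lie, smul_lie, smul_lie, hHE, hHF, hEF, smul_smul, smul_smul]
  norm_num

lemma D_eq_zero {e fv h : L}
    (hHE : ⁅h,e⁆ = (2:ℂ)•e) (hHF : ⁅h,fv⁆ = (-2:ℂ)•fv) (hEF : ⁅e,fv⁆ = h)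
    (hspan : ∀ v : L, ∃ a b c : ℂ, v = a•e + b•fv + c•h)
    (hlam : ∀ x y z w : L, B ⁅x, y⁆ ⁅z, w⁆ + B ⁅y, z⁆ ⁅x, w⁆ + B ⁅z, x⁆ ⁅y, w⁆ = 0)
    (v w : L) : D B v w = 0 := by
  have Dadd1 : ∀ a a' b : L, D B (a+a') b = D B a b + D B a' b := by
    intro a a' b; simp [D, smul_add]; ring
  have Dadd2 : ∀ a b b' : L, D B a (b+b') = D B a b + D B a b' := by
    intro a b b'; simp [D, smul_add]; ring
  have hbr : ∀ (x y : L) (v : L), D B ⁅x,y⁆ v = 0 := by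
    intro x y v
    obtain ⟨x1, y1, x2, y2, x3, y3, rfl⟩ := sum_of_brackets hHE hHF hEF hspan v
    rw [Dadd2, Dadd2, D_brackets hlam, D_brackets hlam, D_brackets hlam]
    ring
  obtain ⟨x1, y1, x2, y2, x3, y3, rfl⟩ := sum_of_brackets hHE hHF hEF hspan v
  rw [Dadd1, Dadd1, hbr, hbr, hbr]
  ring

end PartB
section Sigma
variable {B : L →ₗ[ℝ] L →ₗ[ℝ] ℝ}

lemma hdecomp (c : ℂ) (y : L) : c • y = c.re • y + c.im • ((I:ℂ) • y) := by
  rw [show (c.re : ℝ) • y = ((c.re : ℝ) : ℂ) • y from (algebraMap_smul ℂ _ _).symm]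
  rw [show (c.im : ℝ) • (((I:ℂ)) • y) = ((c.im : ℝ) : ℂ) • ((I:ℂ) • y) from
    (algebraMap_smul ℂ _ _).symm]
  rw [smul_smul, ← add_smul, Complex.re_add_im]

/-- candidate complex bilinear form -/
def sigFun (B : L →ₗ[ℝ] L →ₗ[ℝ] ℝ) (x y : L) : ℂ :=
  (B x y : ℂ) - (B x ((I:ℂ)•y) : ℂ) * I

lemma sigFun_re (x y : L) : (sigFun B x y).re = B x y := by
  simp [sigFun]

lemma B_smul_right (c : ℂ) (x y : L) :
    B x (c • y) = c.re * B x y + c.im * B x ((I:ℂ)•y) := by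
  rw [hdecomp c y, map_add, map_smul, map_smul, smul_eq_mul, smul_eq_mul]

lemma B_I_smul_right (c : ℂ) (x y : L) :
    B x ((I:ℂ) • (c • y)) = -(c.im * B x y) + c.re * B x ((I:ℂ)•y) := by
  rw [smul_smul, B_smul_right (I * c) x y]
  simp [Complex.mul_re, Complex.mul_im]

lemma sigFun_add_right (x y y' : L) :
    sigFun B x (y + y') = sigFun B x y + sigFun B x y' := by
  simp [sigFun, smul_add]
  push_cast
  ring

lemma sigFun_smul_right (c : ℂ) (x y : L) :
    sigFun B x (c • y) = c * sigFun B x y := by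
  simp only [sigFun, B_smul_right c x y, B_I_smul_right c x y]
  rw [← Complex.re_add_im c]
  push_cast
  ring_nf
  simp [Complex.I_sq]
  ring

lemma B_II (x y : L) : B x ((I:ℂ)•((I:ℂ)•y)) = - B x y := by
  rw [smul_smul, Complex.I_mul_I, neg_one_smul, map_neg]

section withkey
variable (hsym : ∀ x y : L, B x y = B y x)
  (hkey : ∀ x y : L, B ((I:ℂ)•x) y = B x ((I:ℂ)•y))
include hkey

lemma sigFun_add_left (x x' y : L) :
    sigFun B (x + x') y = sigFun B x y + sigFun B x' y := by
  simp [sigFun]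
  push_cast
  ring

lemma sigFun_smul_left (c : ℂ) (x y : L) :
    sigFun B (c • x) y = c * sigFun B x y := by
  have e1 : B (c • x) y = c.re * B x y + c.im * B x ((I:ℂ)•y) := by
    rw [hdecomp c x, map_add, LinearMap.add_apply, B.map_smul, B.map_smul,
      LinearMap.smul_apply, LinearMap.smul_apply, smul_eq_mul, smul_eq_mul, hkey]
  have e2 : B (c • x) ((I:ℂ)•y) = -(c.im * B x y) + c.re * B x ((I:ℂ)•y) := by
    rw [hdecomp c x, map_add, LinearMap.add_apply, B.map_smul, B.map_smul,
      LinearMap.smul_apply, LinearMap.smul_apply, smul_eq_mul, smul_eq_mul,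
      hkey x ((I:ℂ)•y), B_II]
    ring
  simp only [sigFun, e1, e2]
  rw [← Complex.re_add_im c]
  push_cast
  ring_nf
  simp [Complex.I_sq]
  ring

include hsym

lemma sigFun_symm (x y : L) : sigFun B x y = sigFun B y x := by
  simp only [sigFun]
  rw [hsym x y, hsym x ((I:ℂ)•y), hkey y x]

/-- the complex bilinear form -/
def sig : L →ₗ[ℂ] L →ₗ[ℂ] ℂ :=
  LinearMap.mk₂ ℂ (sigFun B) (sigFun_add_left hkey) (fun c x y => by
      rw [smul_eq_mul]; exact sigFun_smul_left hkey c x y)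
    sigFun_add_right (fun c x y => by rw [smul_eq_mul]; exact sigFun_smul_right c x y)

lemma sig_apply (x y : L) : sig hkey x y = sigFun B x y := rfl

end withkey
end Sigma


/-- realization map -/
def Phi : (L →ₗ[ℂ] L →ₗ[ℂ] ℂ) →ₗ[ℝ] (L →ₗ[ℝ] L →ₗ[ℝ] ℝ) where
  toFun σ := LinearMap.mk₂ ℝ (fun x y => (σ x y).re)
    (by intro x x' y; simp)
    (by intro r x y
        rw [show r • x = ((r:ℝ):ℂ) • x from (algebraMap_smul ℂ _ _).symm]
        simp [])
    (by intro x y y'; simp)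
    (by intro r x y
        rw [show r • y = ((r:ℝ):ℂ) • y from (algebraMap_smul ℂ _ _).symm]
        simp)
  map_add' σ τ := by
    apply LinearMap.ext; intro x; apply LinearMap.ext; intro y
    simp [LinearMap.mk₂_apply]
  map_smul' r σ := by
    apply LinearMap.ext; intro x; apply LinearMap.ext; intro y
    simp [LinearMap.mk₂_apply, Complex.real_smul]



lemma Phi_apply (σ : L →ₗ[ℂ] L →ₗ[ℂ] ℂ) (x y : L) : Phi σ x y = (σ x y).re := rfl

lemma Phi_injective : Function.Injective (Phi (L := L)) := by
  intro σ τ h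
  have hre : ∀ x y : L, (σ x y).re = (τ x y).re := fun x y =>
    LinearMap.congr_fun (LinearMap.congr_fun h x) y
  apply LinearMap.ext; intro x; apply LinearMap.ext; intro y
  apply Complex.ext
  · exact hre x y
  · have h1 : (σ x ((I:ℂ) • y)).re = (τ x ((I:ℂ) • y)).re := hre x _
    rw [map_smul, map_smul, smul_eq_mul, smul_eq_mul, Complex.mul_re, Complex.mul_re] at h1
    simpa using h1



variable (L) in
/-- symmetric complex bilinear forms -/
def Kc : Submodule ℂ (L →ₗ[ℂ] L →ₗ[ℂ] ℂ) where
  carrier := {σ | ∀ x y, σ x y = σ y x}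
  add_mem' := by intro a b ha hb x y; simp [ha x y, hb x y]
  zero_mem' := by intro x y; simp
  smul_mem' := by intro c a ha x y; simp [ha x y]

lemma mem_Kc {σ : L →ₗ[ℂ] L →ₗ[ℂ] ℂ} : σ ∈ Kc L ↔ ∀ x y, σ x y = σ y x := Iff.rfl

/-- symmetric matrices -/
def Msym : Submodule ℂ (Matrix (Fin 3) (Fin 3) ℂ) where
  carrier := {A | ∀ i j, A i j = A j i}
  add_mem' := by intro a b ha hb i j; simp [ha i j, hb i j]
  zero_mem' := by intro i j; simp
  smul_mem' := by intro c a ha i j; simp [ha i j]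

abbrev SIdx := {p : Fin 3 × Fin 3 // p.1 ≤ p.2}

def msymEquiv : ↥Msym ≃ₗ[ℂ] (SIdx → ℂ) where
  toFun A := fun p => A.1 p.1.1 p.1.2
  map_add' A B := by funext p; rfl
  map_smul' c A := by funext p; rfl
  invFun f := ⟨Matrix.of fun i j =>
      if h : i ≤ j then f ⟨(i,j), h⟩ else f ⟨(j,i), le_of_not_ge h⟩, by
    intro i j
    rcases le_total i j with hij | hji
    · by_cases hji : j ≤ i
      · have hij' : i = j := le_antisymm hij hji
        subst hij'
        simp
      · simp [Matrix.of_apply, hij, hji]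
    · by_cases hij : i ≤ j
      · have hij' : i = j := le_antisymm hij hji
        subst hij'
        simp
      · simp [Matrix.of_apply, hij, hji]⟩
  left_inv A := by
    apply Subtype.ext
    ext i j
    by_cases h : i ≤ j
    · simp [Matrix.of_apply, h]
    · simp [Matrix.of_apply, h]
      exact (A.2 j i)
  right_inv f := by
    funext p
    obtain ⟨⟨i, j⟩, hp⟩ := p
    simp [Matrix.of_apply, hp]

lemma card_SIdx : Fintype.card SIdx = 6 := by decide

lemma finrank_Msym : finrank ℂ ↥Msym = 6 := by
  rw [msymEquiv.finrank_eq, finrank_pi, card_SIdx]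

lemma finrank_Kc (b : Basis (Fin 3) ℂ L) : finrank ℂ ↥(Kc L) = 6 := by
  set tm := (LinearMap.toMatrix₂ b b : (L →ₗ[ℂ] L →ₗ[ℂ] ℂ) ≃ₗ[ℂ] Matrix (Fin 3) (Fin 3) ℂ)
    with htm
  have hmap : Submodule.map tm.toLinearMap (Kc L) = Msym := by
    ext A
    constructor
    · rintro ⟨σ, hσ, rfl⟩
      intro i j
      show tm σ i j = tm σ j i
      rw [htm, LinearMap.toMatrix₂_apply, LinearMap.toMatrix₂_apply]
      exact hσ _ _
    · intro hA
      refine ⟨tm.symm A, ?_, by simp⟩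
      set σ := tm.symm A with hσdef
      have hback : tm σ = A := by
        rw [hσdef, LinearEquiv.apply_symm_apply]
      have hbasis : ∀ i j, σ (b i) (b j) = σ (b j) (b i) := by
        intro i j
        have h1 : σ (b i) (b j) = A i j := by
          rw [← hback, htm, LinearMap.toMatrix₂_apply]
        have h2 : σ (b j) (b i) = A j i := by
          rw [← hback, htm, LinearMap.toMatrix₂_apply]
        rw [h1, h2]
        exact hA i j
      have hflip : σ = σ.flip := by
        apply LinearMap.ext_basis b b
        intro i j
        rw [LinearMap.flip_apply]
        exact hbasis i j
      intro x y
      conv_lhs => rw [hflip]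
      rfl
  have := LinearEquiv.finrank_map_eq tm (Kc L)
  rw [hmap] at this
  rw [← this, finrank_Msym]

lemma finrank_KcR (b : Basis (Fin 3) ℂ L) :
    finrank ℝ ↥((Kc L).restrictScalars ℝ) = 12 := by
  have h1 : finrank ℝ ↥((Kc L).restrictScalars ℝ) = finrank ℝ ↥(Kc L) :=
    ((Submodule.restrictScalarsEquiv ℝ ℂ (L →ₗ[ℂ] L →ₗ[ℂ] ℂ) (Kc L)).restrictScalars
      ℝ).finrank_eq
  haveI : Module.Free ℂ ↥(Kc L) := Module.Free.of_divisionRing ℂ ↥(Kc L)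
  have h2 : finrank ℝ ℂ * finrank ℂ ↥(Kc L) = finrank ℝ ↥(Kc L) :=
    Module.finrank_mul_finrank ℝ ℂ ↥(Kc L)
  rw [h1, ← h2, Complex.finrank_real_complex, finrank_Kc b]
end KLA
end
/-- Let `g` be a complex simple Lie algebra isomorphic to `sl(2,ℂ)`,
viewed as a 6-dimensional real Lie algebra.  The kernel of `Λ` on real symmetric
bilinear forms has real dimension 12 and consists exactly of the real parts of all
symmetric `ℂ`-bilinear forms on `g`. -/
theorem ker_lambda_sl2C_dim_twelve
    {L : Type*} [LieRing L] [LieAlgebra ℂ L] [Module ℝ L] [IsScalarTower ℝ ℂ L]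
    (hiso : Nonempty (L ≃ₗ⁅ℂ⁆ LieAlgebra.SpecialLinear.sl (Fin 2) ℂ)) :
    Module.finrank ℝ ↥(Submodule.span ℝ
      {B : L →ₗ[ℝ] L →ₗ[ℝ] ℝ | (∀ x y : L, B x y = B y x) ∧
        ∀ x y z w : L, B ⁅x, y⁆ ⁅z, w⁆ + B ⁅y, z⁆ ⁅x, w⁆ + B ⁅z, x⁆ ⁅y, w⁆ = 0}) = 12 ∧
    {B : L →ₗ[ℝ] L →ₗ[ℝ] ℝ | (∀ x y : L, B x y = B y x) ∧
        ∀ x y z w : L, B ⁅x, y⁆ ⁅z, w⁆ + B ⁅y, z⁆ ⁅x, w⁆ + B ⁅z, x⁆ ⁅y, w⁆ = 0} =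
      {B : L →ₗ[ℝ] L →ₗ[ℝ] ℝ | ∃ σ : L →ₗ[ℂ] L →ₗ[ℂ] ℂ,
        (∀ x y : L, σ x y = σ y x) ∧ ∀ x y : L, B x y = (σ x y).re} := by
  obtain ⟨f⟩ := hiso
  obtain ⟨e, fv, h, hHE, hHF, hEF, hspan, hindep⟩ := KLA.exists_sl2_triple f
  have hspan_top : ⊤ ≤ Submodule.span ℂ (Set.range ![e, fv, h]) := by
    intro v _
    obtain ⟨a, b, c, rfl⟩ := hspan v
    have he : e ∈ Set.range ![e, fv, h] := ⟨0, rfl⟩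
    have hf : fv ∈ Set.range ![e, fv, h] := ⟨1, rfl⟩
    have hh : h ∈ Set.range ![e, fv, h] := ⟨2, rfl⟩
    exact Submodule.add_mem _ (Submodule.add_mem _
      (Submodule.smul_mem _ _ (Submodule.subset_span he))
      (Submodule.smul_mem _ _ (Submodule.subset_span hf)))
      (Submodule.smul_mem _ _ (Submodule.subset_span hh))
  let b : Module.Basis (Fin 3) ℂ L := Module.Basis.mk hindep hspan_top
  have hsets : {B : L →ₗ[ℝ] L →ₗ[ℝ] ℝ | (∀ x y : L, B x y = B y x) ∧
        ∀ x y z w : L, B ⁅x, y⁆ ⁅z, w⁆ + B ⁅y, z⁆ ⁅x, w⁆ + B ⁅z, x⁆ ⁅y, w⁆ = 0} =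
      {B : L →ₗ[ℝ] L →ₗ[ℝ] ℝ | ∃ σ : L →ₗ[ℂ] L →ₗ[ℂ] ℂ,
        (∀ x y : L, σ x y = σ y x) ∧ ∀ x y : L, B x y = (σ x y).re} := by
    ext B
    constructor
    · rintro ⟨hsym, hlam⟩
      have hkey : ∀ x y : L, B ((Complex.I : ℂ) • x) y = B x ((Complex.I : ℂ) • y) := by
        intro x y
        have hD := KLA.D_eq_zero hHE hHF hEF hspan hlam x y
        simpa [KLA.D, sub_eq_zero] using hD
      exact ⟨KLA.sig hkey, fun x y => KLA.sigFun_symm hsym hkey x y,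
        fun x y => (KLA.sigFun_re x y).symm⟩
    · rintro ⟨σ, hσ, hB⟩
      constructor
      · intro x y
        rw [hB, hB, hσ]
      · intro x y z w
        have hS := KLA.S_vanish hσ hspan x y z w
        rw [hB, hB, hB, ← Complex.add_re, ← Complex.add_re]
        rw [show σ ⁅x, y⁆ ⁅z, w⁆ + σ ⁅y, z⁆ ⁅x, w⁆ + σ ⁅z, x⁆ ⁅y, w⁆
            = KLA.S σ x y z w from rfl, hS]
        exact Complex.zero_re
  refine ⟨?_, hsets⟩
  rw [hsets]
  have hT : {B : L →ₗ[ℝ] L →ₗ[ℝ] ℝ | ∃ σ : L →ₗ[ℂ] L →ₗ[ℂ] ℂ,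
        (∀ x y : L, σ x y = σ y x) ∧ ∀ x y : L, B x y = (σ x y).re} =
      ↑(Submodule.map (KLA.Phi (L := L)) ((KLA.Kc L).restrictScalars ℝ)) := by
    ext B
    simp only [Set.mem_setOf_eq, SetLike.mem_coe, Submodule.mem_map,
      Submodule.restrictScalars_mem, KLA.mem_Kc]
    constructor
    · rintro ⟨σ, hσ, hB⟩
      refine ⟨σ, hσ, ?_⟩
      apply LinearMap.ext; intro x; apply LinearMap.ext; intro y
      exact (hB x y).symm
    · rintro ⟨σ, hσ, rfl⟩
      exact ⟨σ, hσ, fun x y => rfl⟩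
  rw [hT, Submodule.span_eq]
  have hfin : Module.finrank ℝ ↥((KLA.Kc L).restrictScalars ℝ) =
      Module.finrank ℝ ↥(Submodule.map (KLA.Phi (L := L)) ((KLA.Kc L).restrictScalars ℝ)) :=
    (Submodule.equivMapOfInjective (KLA.Phi (L := L)) KLA.Phi_injective
      ((KLA.Kc L).restrictScalars ℝ)).finrank_eq
  rw [← hfin, KLA.finrank_KcR b]
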